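/- (Expansion of x^n in q-Euler polynomials.) For every integer n ≥ 0 and all x ∈ ℂ: x^n = (2^{n−1}/(−1;q)_n) · ( Σ_{k=0}^{n} [n choose k]_q ((−1;q)_{n−k}/2^{n−k}) E_{k,q}(x) + E_{n,q}(x) ). (This is the q-analogue of x^n = (1/2)[Σ_{k=0}^{n} C(n,k) E_k(x) + E_n(x)].) -/

import Mathlib

open Finset PowerSeries

/-- The `q`-number `[n]_q = (1 - q^n)/(1 - q)`. -/
noncomputable def qNum (q : ℂ) (n : ℕ) : ℂ := (1 - q ^ n) / (1 - q)

/-- The `q`-factorial `[n]_q!`. -/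
noncomputable def qFact (q : ℂ) : ℕ → ℂ
  | 0 => 1
  | n + 1 => qNum q (n + 1) * qFact q n

/-- The `q`-shifted factorial `(a; q)_n = ∏_{j=0}^{n-1} (1 - q^j a)`. -/
noncomputable def qShift (a q : ℂ) (n : ℕ) : ℂ := ∏ j ∈ Finset.range n, (1 - q ^ j * a)

/-- The Gaussian binomial coefficient `[n choose k]_q = (q;q)_n / ((q;q)_{n-k} (q;q)_k)`. -/
noncomputable def qBinom (q : ℂ) (n k : ℕ) : ℂ :=
  qShift q q n / (qShift q q (n - k) * qShift q q k)

/-- The formal power series (in `t`) `𝓔_q(tx) = Σ_{n≥0} (-1;q)_n (x)^n t^n / (2^n [n]_q!)`. -/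
noncomputable def qExp (q x : ℂ) : PowerSeries ℂ :=
  PowerSeries.mk fun n => qShift (-1) q n * x ^ n / (2 ^ n * qFact q n)

/-- The generating series `Σ_{n≥0} a_n t^n / [n]_q!` of a sequence `a`. -/
noncomputable def qGen (q : ℂ) (a : ℕ → ℂ) : PowerSeries ℂ :=
  PowerSeries.mk fun n => a n / qFact q n

/-- The `q`-addition `(x ⊕_q y)^n`. -/
noncomputable def qAdd (q x y : ℂ) (n : ℕ) : ℂ :=
  ∑ k ∈ Finset.range (n + 1),
    qBinom q n k * (qShift (-1) q k * qShift (-1) q (n - k) / 2 ^ n) * x ^ k * y ^ (n - k)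


section Aux

variable {q : ℂ}

lemma one_sub_q_pow_succ_ne (hq1 : ‖q‖ < 1) (m : ℕ) : 1 - q ^ (m + 1) ≠ 0 := by
  intro h
  have hq : q ^ (m + 1) = 1 := by linear_combination -h
  have h2 : ‖q‖ ^ (m + 1) = 1 := by rw [← norm_pow, hq, norm_one]
  have h3 : ‖q‖ ^ (m + 1) ≤ ‖q‖ ^ 1 :=
    pow_le_pow_of_le_one (norm_nonneg q) hq1.le (by omega)
  rw [pow_one] at h3
  linarith

lemma one_sub_q_ne (hq1 : ‖q‖ < 1) : 1 - q ≠ 0 := by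
  have := one_sub_q_pow_succ_ne hq1 0
  rwa [pow_one] at this

lemma one_add_q_pow_ne (hq1 : ‖q‖ < 1) (j : ℕ) : 1 + q ^ j ≠ 0 := by
  cases j with
  | zero => norm_num
  | succ m =>
    intro h
    have hq : q ^ (m + 1) = -1 := by linear_combination h
    have h2 : ‖q‖ ^ (m + 1) = 1 := by
      rw [← norm_pow, hq]; simp
    have h3 : ‖q‖ ^ (m + 1) ≤ ‖q‖ ^ 1 :=
      pow_le_pow_of_le_one (norm_nonneg q) hq1.le (by omega)
    rw [pow_one] at h3
    linarith

lemma qFact_ne_zero (hq1 : ‖q‖ < 1) : ∀ m, qFact q m ≠ 0 := by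
  intro m
  induction m with
  | zero => simp [qFact]
  | succ k ih =>
    simp only [qFact]
    exact mul_ne_zero (div_ne_zero (one_sub_q_pow_succ_ne hq1 k) (one_sub_q_ne hq1)) ih

lemma qShift_neg_one_ne_zero (hq1 : ‖q‖ < 1) (m : ℕ) : qShift (-1) q m ≠ 0 := by
  unfold qShift
  apply Finset.prod_ne_zero_iff.mpr
  intro j _
  have := one_add_q_pow_ne hq1 j
  intro h
  apply this
  linear_combination h

lemma qShift_q_ne_zero (hq1 : ‖q‖ < 1) (m : ℕ) : qShift q q m ≠ 0 := by
  unfold qShift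
  apply Finset.prod_ne_zero_iff.mpr
  intro j _
  have := one_sub_q_pow_succ_ne hq1 j
  intro h
  apply this
  rw [pow_succ]
  linear_combination h

lemma qShift_q_eq (hq1 : ‖q‖ < 1) : ∀ m, qShift q q m = qFact q m * (1 - q) ^ m := by
  intro m
  induction m with
  | zero => simp [qShift, qFact]
  | succ k ih =>
    rw [qShift, Finset.prod_range_succ, ← qShift, ih]
    simp only [qFact, qNum]
    rw [← pow_succ]
    field_simp [one_sub_q_ne hq1]
    ring

lemma qBinom_eq (hq1 : ‖q‖ < 1) {n k : ℕ} (hk : k ≤ n) :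
    qBinom q n k = qFact q n / (qFact q k * qFact q (n - k)) := by
  unfold qBinom
  rw [qShift_q_eq hq1 n, qShift_q_eq hq1 k, qShift_q_eq hq1 (n - k)]
  have hpow : (1 - q) ^ (n - k) * (1 - q) ^ k = (1 - q) ^ n := by
    rw [← pow_add]
    congr 1
    omega
  have h1 := one_sub_q_ne hq1
  have hf := qFact_ne_zero hq1
  rw [div_eq_div_iff
    (mul_ne_zero (mul_ne_zero (hf (n - k)) (pow_ne_zero _ h1))
      (mul_ne_zero (hf k) (pow_ne_zero _ h1)))
    (mul_ne_zero (hf k) (hf (n - k)))]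
  linear_combination -(qFact q n * qFact q k * qFact q (n - k)) * hpow

lemma qExp_zero (q : ℂ) : qExp q 0 = 1 := by
  ext n
  rw [qExp, PowerSeries.coeff_mk, PowerSeries.coeff_one]
  cases n with
  | zero => simp [qShift, qFact]
  | succ m => simp [zero_pow]

end Aux

/-- Expansion of `x^n` in `q`-Euler polynomials:
`x^n = (2^{n-1}/(-1;q)_n)(Σ_{k=0}^n [n choose k]_q ((-1;q)_{n-k}/2^{n-k}) E_{k,q}(x) + E_{n,q}(x))`. -/
theorem pow_eq_sum_qEuler (q : ℂ) (hq0 : 0 < ‖q‖) (hq1 : ‖q‖ < 1)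
    (E : ℂ → ℂ → ℕ → ℂ)
    (hE : ∀ x y : ℂ, qGen q (E x y) * (qExp q 1 + 1) = 2 * qExp q x * qExp q y)
    (n : ℕ) (x : ℂ) :
    x ^ n = (2 : ℂ) ^ ((n : ℤ) - 1) / qShift (-1) q n *
      ((∑ k ∈ Finset.range (n + 1),
          qBinom q n k * (qShift (-1) q (n - k) / 2 ^ (n - k)) * E x 0 k) + E x 0 n) := by
  have h1q := one_sub_q_ne hq1
  have hf := qFact_ne_zero hq1
  have hs := qShift_neg_one_ne_zero hq1
  have key := congrArg (PowerSeries.coeff n) (hE x 0)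
  rw [qExp_zero, mul_one, PowerSeries.coeff_mul] at key
  have hrhs : (PowerSeries.coeff n) (2 * qExp q x)
      = 2 * (qShift (-1) q n * x ^ n / (2 ^ n * qFact q n)) := by
    have : (2 : PowerSeries ℂ) = PowerSeries.C 2 := (map_ofNat PowerSeries.C 2).symm
    rw [this, PowerSeries.coeff_C_mul, qExp, PowerSeries.coeff_mk]
  rw [hrhs] at key
  rw [Finset.Nat.sum_antidiagonal_eq_sum_range_succ_mk] at key
  simp only [qGen, qExp, PowerSeries.coeff_mk, map_add, PowerSeries.coeff_one, one_pow, mul_one, Nat.succ_eq_add_one] at key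
  have hsplit : ∑ k ∈ Finset.range (n + 1),
      E x 0 k / qFact q k *
        (qShift (-1) q (n - k) / (2 ^ (n - k) * qFact q (n - k)) +
          if n - k = 0 then (1 : ℂ) else 0)
      = (∑ k ∈ Finset.range (n + 1),
          E x 0 k / qFact q k * (qShift (-1) q (n - k) / (2 ^ (n - k) * qFact q (n - k))))
        + E x 0 n / qFact q n := by
    simp only [mul_add]
    rw [Finset.sum_add_distrib]
    congr 1
    rw [Finset.sum_eq_single n]
    · simp
    · intro k hk hkn
      have : n - k ≠ 0 := by
        simp only [Finset.mem_range] at hk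
        omega
      simp [this]
    · intro h
      exact absurd (Finset.self_mem_range_succ n) h
  rw [hsplit] at key
  -- rewrite target sum
  have hsum : ∑ k ∈ Finset.range (n + 1),
      qBinom q n k * (qShift (-1) q (n - k) / 2 ^ (n - k)) * E x 0 k
      = qFact q n * ∑ k ∈ Finset.range (n + 1),
          E x 0 k / qFact q k * (qShift (-1) q (n - k) / (2 ^ (n - k) * qFact q (n - k))) := by
    rw [Finset.mul_sum]
    apply Finset.sum_congr rfl
    intro k hk
    have hkn : k ≤ n := by
      simp only [Finset.mem_range] at hk; omega
    rw [qBinom_eq hq1 hkn]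
    have h2 : (2 : ℂ) ^ (n - k) ≠ 0 := pow_ne_zero _ two_ne_zero
    field_simp
  rw [hsum]
  have hFn := hf n
  have hSn := hs n
  have hEn : E x 0 n = qFact q n * (E x 0 n / qFact q n) := by
    rw [mul_comm, div_mul_cancel₀ _ (hf n)]
  rw [hEn, ← mul_add, key]
  have h2n : (2 : ℂ) ^ n ≠ 0 := pow_ne_zero _ two_ne_zero
  have hz : (2 : ℂ) ^ ((n : ℤ) - 1) = 2 ^ n / 2 := by
    rw [zpow_sub₀ (by norm_num : (2:ℂ) ≠ 0), zpow_natCast, zpow_one]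
  have hclean : qFact q n * (2 * (qShift (-1) q n * x ^ n / (2 ^ n * qFact q n)))
      = 2 * qShift (-1) q n * x ^ n / 2 ^ n := by
    field_simp
  rw [hz, hclean]
  field_simp
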